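/- If I ⊆ F_5^2 has |I| ≥ 9 and the complement of the difference set I - I contains two linearly independent vectors, then I is contained in the union of three parallel lines. -/

import Mathlib

open Finset Pointwise

def Adj5 (A B : Finset (ZMod 5)) : Prop :=
  ∀ a ∈ A, ∀ b ∈ B, b - a ≠ 1 ∧ b - a ≠ 4

instance : ∀ A B, Decidable (Adj5 A B) := fun A B => by unfold Adj5; infer_instance

set_option maxHeartbeats 4000000 in
lemma adj_card_le : ∀ A B : Finset (ZMod 5), Adj5 A B → A ≠ ∅ → B ≠ ∅ →
    A.card + B.card ≤ 4 := by decide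

set_option maxHeartbeats 4000000 in
lemma adj_union_card : ∀ A B : Finset (ZMod 5), Adj5 A B → A ≠ ∅ → B ≠ ∅ →
    4 ≤ A.card + B.card → (A ∪ B).card ≤ 3 := by decide

set_option maxHeartbeats 16000000 in
lemma adj_next : ∀ A B C : Finset (ZMod 5), Adj5 A B → Adj5 B C → A ≠ ∅ → B ≠ ∅ →
    4 ≤ A.card + B.card → C ⊆ A ∪ B := by decide

set_option maxHeartbeats 16000000 in
lemma adj_prev : ∀ A B C : Finset (ZMod 5), Adj5 B C → Adj5 A B → B ≠ ∅ → C ≠ ∅ →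
    4 ≤ B.card + C.card → A ⊆ B ∪ C := by decide

lemma cover_of_two_missing : ∀ s t : ZMod 5, s ≠ t → ∃ c₁ c₂ c₃ : ZMod 5,
    ∀ r : ZMod 5, r ≠ s → r ≠ t → r = c₁ ∨ r = c₂ ∨ r = c₃ := by decide

set_option maxHeartbeats 4000000 in
lemma cover_of_card_le_three : ∀ U : Finset (ZMod 5), U.card ≤ 3 →
    ∃ c₁ c₂ c₃ : ZMod 5, ∀ r ∈ U, r = c₁ ∨ r = c₂ ∨ r = c₃ := by decide

lemma zmod5_cases : ∀ s t : ZMod 5,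
    s = t ∨ s = t + 1 ∨ s = t + 2 ∨ s = t + 3 ∨ s = t + 4 := by decide

lemma zmod5_idx : ∀ a : ZMod 5, a + 1 + 1 = a + 2 ∧ a + 2 + 1 = a + 3 ∧
    a + 3 + 1 = a + 4 ∧ a + 4 + 1 = a ∧ a + 1 ≠ a ∧ a + 2 ≠ a ∧ a + 3 ≠ a ∧ a + 4 ≠ a := by
  decide

lemma zmod5_solve1 : ∀ a b : ZMod 5, a + b = 1 → a - b = 1 → a = 1 ∧ b = 0 := by decide

lemma zmod5_solve2 : ∀ a b : ZMod 5, a + b = 1 → a - b = 4 → a = 0 ∧ b = 1 := by decide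

lemma zmod5_inj : ∀ a b c d : ZMod 5, a + b = c + d → a - b = c - d → a = c ∧ b = d := by
  decide

lemma sum5 (f : ZMod 5 → ℕ) : ∑ s : ZMod 5, f s = f 0 + f 1 + f 2 + f 3 + f 4 := by
  rw [show (univ : Finset (ZMod 5)) = {0, 1, 2, 3, 4} from by decide]
  rw [sum_insert (by decide), sum_insert (by decide), sum_insert (by decide),
    sum_insert (by decide), sum_singleton]
  ring

lemma sum5' (f : ZMod 5 → ℕ) (j : ZMod 5) :
    ∑ s : ZMod 5, f s = f j + f (j + 1) + f (j + 2) + f (j + 3) + f (j + 4) := by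
  have h := Fintype.sum_equiv (Equiv.addLeft j) (fun s => f (j + s)) f (fun _ => rfl)
  rw [← h, sum5 (fun s => f (j + s))]
  simp only [add_zero]

lemma surj_of_ne_zero (φ : (ZMod 5 × ZMod 5) →ₗ[ZMod 5] ZMod 5) (m : ZMod 5 × ZMod 5)
    (h : φ m ≠ 0) : Function.Surjective φ := by
  haveI : Fact (Nat.Prime 5) := ⟨by norm_num⟩
  intro c
  refine ⟨(c * (φ m)⁻¹) • m, ?_⟩
  rw [map_smul, smul_eq_mul, mul_assoc, inv_mul_cancel₀ h, mul_one]

lemma pent (D : ZMod 5 → Finset (ZMod 5)) (hcon : ∀ s, Adj5 (D s) (D (s + 1)))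
    (hne : ∀ s, D s ≠ ∅) (j : ZMod 5)
    (h1 : 4 ≤ (D j).card + (D (j + 1)).card)
    (h2 : 4 ≤ (D (j + 1)).card + (D (j + 2)).card) :
    ∀ s, D s ⊆ D j ∪ D (j + 1) := by
  obtain ⟨e12, e23, e34, e40, -⟩ := zmod5_idx j
  have c01 := hcon j
  have c12 : Adj5 (D (j + 1)) (D (j + 2)) := by have := hcon (j + 1); rwa [e12] at this
  have c23 : Adj5 (D (j + 2)) (D (j + 3)) := by have := hcon (j + 2); rwa [e23] at this
  have c40 : Adj5 (D (j + 4)) (D j) := by have := hcon (j + 4); rwa [e40] at this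
  have hU2 : D (j + 2) ⊆ D j ∪ D (j + 1) :=
    adj_next _ _ _ c01 c12 (hne j) (hne (j + 1)) h1
  have hU3 : D (j + 3) ⊆ D j ∪ D (j + 1) := by
    have h3 : D (j + 3) ⊆ D (j + 1) ∪ D (j + 2) :=
      adj_next _ _ _ c12 c23 (hne (j + 1)) (hne (j + 2)) h2
    exact h3.trans (union_subset subset_union_right hU2)
  have hU4 : D (j + 4) ⊆ D j ∪ D (j + 1) :=
    adj_prev _ _ _ c01 c40 (hne j) (hne (j + 1)) h1
  intro s
  rcases zmod5_cases s j with h | h | h | h | h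
  · exact h ▸ subset_union_left
  · exact h ▸ subset_union_right
  · exact h ▸ hU2
  · exact h ▸ hU3
  · exact h ▸ hU4

theorem stmt_6 (I : Finset (ZMod 5 × ZMod 5)) (hcard : 9 ≤ I.card)
    (u v : ZMod 5 × ZMod 5) (hli : LinearIndependent (ZMod 5) ![u, v])
    (hu : u ∉ I - I) (hv : v ∉ I - I) :
    ∃ (φ : (ZMod 5 × ZMod 5) →ₗ[ZMod 5] ZMod 5) (c₁ c₂ c₃ : ZMod 5),
      Function.Surjective φ ∧ ∀ p ∈ I, φ p = c₁ ∨ φ p = c₂ ∨ φ p = c₃ := by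
  haveI : Fact (Nat.Prime 5) := ⟨by norm_num⟩
  have hrank : Fintype.card (Fin 2) = Module.finrank (ZMod 5) (ZMod 5 × ZMod 5) := by
    simp
  let B := basisOfLinearIndependentOfCardEqFinrank hli hrank
  have hB0 : B 0 = u := by
    show (basisOfLinearIndependentOfCardEqFinrank hli hrank) 0 = u
    rw [coe_basisOfLinearIndependentOfCardEqFinrank]
    rfl
  have hB1 : B 1 = v := by
    show (basisOfLinearIndependentOfCardEqFinrank hli hrank) 1 = v
    rw [coe_basisOfLinearIndependentOfCardEqFinrank]
    rfl
  set σ : (ZMod 5 × ZMod 5) →ₗ[ZMod 5] ZMod 5 := B.coord 0 + B.coord 1 with hσdef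
  set δ : (ZMod 5 × ZMod 5) →ₗ[ZMod 5] ZMod 5 := B.coord 0 - B.coord 1 with hδdef
  have hσa : ∀ m, σ m = B.coord 0 m + B.coord 1 m := fun _ => rfl
  have hδa : ∀ m, δ m = B.coord 0 m - B.coord 1 m := fun _ => rfl
  have hx_u : B.coord 0 u = 1 := by
    rw [← hB0, Module.Basis.coord_apply, Module.Basis.repr_self]; exact Finsupp.single_eq_same
  have hy_u : B.coord 1 u = 0 := by
    rw [← hB0, Module.Basis.coord_apply, Module.Basis.repr_self]
    exact Finsupp.single_eq_of_ne' (by decide)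
  have hexp : ∀ m : ZMod 5 × ZMod 5, (B.coord 0 m) • u + (B.coord 1 m) • v = m := by
    intro m
    have h := B.sum_repr m
    rw [Fin.sum_univ_two, hB0, hB1] at h
    rw [Module.Basis.coord_apply, Module.Basis.coord_apply]
    exact h
  -- key structural fact
  have key : ∀ p ∈ I, ∀ q ∈ I, σ p - σ q = 1 → δ p - δ q ≠ 1 ∧ δ p - δ q ≠ 4 := by
    intro p hp q hq hσpq
    rw [hσa p, hσa q] at hσpq
    have hσ' : (B.coord 0 p - B.coord 0 q) + (B.coord 1 p - B.coord 1 q) = 1 := by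
      linear_combination hσpq
    constructor <;> intro hδpq <;> rw [hδa p, hδa q] at hδpq
    · have hδ' : (B.coord 0 p - B.coord 0 q) - (B.coord 1 p - B.coord 1 q) = 1 := by
        linear_combination hδpq
      obtain ⟨ha, hb⟩ := zmod5_solve1 _ _ hσ' hδ'
      apply hu
      have h := hexp (p - q)
      rw [map_sub, map_sub, ha, hb, one_smul, zero_smul, add_zero] at h
      rw [h]
      exact Finset.sub_mem_sub hp hq
    · have hδ' : (B.coord 0 p - B.coord 0 q) - (B.coord 1 p - B.coord 1 q) = 4 := by
        linear_combination hδpq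
      obtain ⟨ha, hb⟩ := zmod5_solve2 _ _ hσ' hδ'
      apply hv
      have h := hexp (p - q)
      rw [map_sub, map_sub, ha, hb, one_smul, zero_smul, zero_add] at h
      rw [h]
      exact Finset.sub_mem_sub hp hq
  -- the fiber structure
  set D : ZMod 5 → Finset (ZMod 5) :=
    fun s => (I.filter (fun p => σ p = s)).image δ with hD
  have hmemD : ∀ p ∈ I, δ p ∈ D (σ p) := by
    intro p hp
    rw [hD]
    exact mem_image_of_mem δ (mem_filter.mpr ⟨hp, rfl⟩)
  have hfcard : ∀ s, (D s).card = (I.filter (fun p => σ p = s)).card := by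
    intro s
    rw [hD]
    apply card_image_of_injOn
    intro p hp q hq hpq
    rw [mem_coe, mem_filter] at hp hq
    rw [hδa p, hδa q] at hpq
    have hσs : B.coord 0 p + B.coord 1 p = B.coord 0 q + B.coord 1 q := by
      have h1 := hp.2; have h2 := hq.2
      rw [hσa] at h1 h2
      rw [h1, h2]
    obtain ⟨ha, hb⟩ := zmod5_inj _ _ _ _ hσs hpq
    rw [← hexp p, ← hexp q, ha, hb]
  have hsumEq : ∑ s : ZMod 5, (D s).card = I.card := by
    rw [Finset.card_eq_sum_card_fiberwise (f := σ) (t := univ) (fun x _ => mem_univ (σ x))]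
    exact sum_congr rfl fun s _ => hfcard s
  have hadj : ∀ s, Adj5 (D s) (D (s + 1)) := by
    intro s a ha b hb
    rw [hD] at ha hb
    obtain ⟨q, hq, rfl⟩ := mem_image.mp ha
    obtain ⟨p, hp, rfl⟩ := mem_image.mp hb
    rw [mem_filter] at hq hp
    exact key p hp.1 q hq.1 (by rw [hp.2, hq.2]; ring)
  by_cases h2e : ∃ s t : ZMod 5, s ≠ t ∧ D s = ∅ ∧ D t = ∅
  · -- at most three values of σ
    obtain ⟨s, t, hst, hs, ht⟩ := h2e
    obtain ⟨c₁, c₂, c₃, hc⟩ := cover_of_two_missing s t hst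
    refine ⟨σ, c₁, c₂, c₃, surj_of_ne_zero σ u (by rw [hσa, hx_u, hy_u, add_zero]; exact one_ne_zero), ?_⟩
    intro p hp
    have hps : σ p ≠ s := by
      intro h
      have := hmemD p hp
      rw [h, hs] at this
      exact notMem_empty _ this
    have hpt : σ p ≠ t := by
      intro h
      have := hmemD p hp
      rw [h, ht] at this
      exact notMem_empty _ this
    exact hc _ hps hpt
  · push_neg at h2e
    by_cases hE : ∃ j, D j = ∅
    · -- exactly one empty fiber: impossible
      exfalso
      obtain ⟨j, hj⟩ := hE
      have hne : ∀ i : ZMod 5, i ≠ j → D i ≠ ∅ := by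
        intro i hi h
        exact (h2e i j hi h).ne_empty hj
      obtain ⟨e12, e23, e34, e40, n1, n2, n3, n4⟩ := zmod5_idx j
      have p1 : (D (j + 1)).card + (D (j + 2)).card ≤ 4 := by
        have h := hadj (j + 1)
        rw [e12] at h
        exact adj_card_le _ _ h (hne _ n1) (hne _ n2)
      have p2 : (D (j + 3)).card + (D (j + 4)).card ≤ 4 := by
        have h := hadj (j + 3)
        rw [e34] at h
        exact adj_card_le _ _ h (hne _ n3) (hne _ n4)
      have hs : I.card = (D j).card + (D (j + 1)).card + (D (j + 2)).card +
          (D (j + 3)).card + (D (j + 4)).card := by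
        rw [← hsumEq]; exact sum5' (fun s => (D s).card) j
      have hj0 : (D j).card = 0 := by rw [hj]; rfl
      omega
    · -- no empty fiber : at most three values of δ
      push_neg at hE
      replace hE : ∀ j, D j ≠ ∅ := fun j => (hE j).ne_empty
      have e01 : (0 : ZMod 5) + 1 = 1 := by rfl
      have e12 : (1 : ZMod 5) + 1 = 2 := by rfl
      have e23 : (2 : ZMod 5) + 1 = 3 := by rfl
      have e34 : (3 : ZMod 5) + 1 = 4 := by rfl
      have e40 : (4 : ZMod 5) + 1 = 0 := by rfl
      have t01 : (D 0).card + (D 1).card ≤ 4 := by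
        have h := hadj 0; rw [e01] at h; exact adj_card_le _ _ h (hE 0) (hE 1)
      have t12 : (D 1).card + (D 2).card ≤ 4 := by
        have h := hadj 1; rw [e12] at h; exact adj_card_le _ _ h (hE 1) (hE 2)
      have t23 : (D 2).card + (D 3).card ≤ 4 := by
        have h := hadj 2; rw [e23] at h; exact adj_card_le _ _ h (hE 2) (hE 3)
      have t34 : (D 3).card + (D 4).card ≤ 4 := by
        have h := hadj 3; rw [e34] at h; exact adj_card_le _ _ h (hE 3) (hE 4)
      have t40 : (D 4).card + (D 0).card ≤ 4 := by
        have h := hadj 4; rw [e40] at h; exact adj_card_le _ _ h (hE 4) (hE 0)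
      have h9 : I.card = (D 0).card + (D 1).card + (D 2).card + (D 3).card +
          (D 4).card := by
        rw [← hsumEq]; exact sum5 (fun s => (D s).card)
      have hpig : ∃ j : ZMod 5, 4 ≤ (D j).card + (D (j + 1)).card ∧
          4 ≤ (D (j + 1)).card + (D (j + 2)).card := by
        have hd : ((D 0).card + (D 1).card = 4 ∧ (D 1).card + (D 2).card = 4) ∨
            ((D 1).card + (D 2).card = 4 ∧ (D 2).card + (D 3).card = 4) ∨
            ((D 2).card + (D 3).card = 4 ∧ (D 3).card + (D 4).card = 4) ∨
            ((D 3).card + (D 4).card = 4 ∧ (D 4).card + (D 0).card = 4) ∨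
            ((D 4).card + (D 0).card = 4 ∧ (D 0).card + (D 1).card = 4) := by omega
        rcases hd with ⟨ha, hb⟩ | ⟨ha, hb⟩ | ⟨ha, hb⟩ | ⟨ha, hb⟩ | ⟨ha, hb⟩
        · exact ⟨0, by rw [e01]; omega, by rw [e01, show ((0:ZMod 5))+2 = 2 from rfl]; omega⟩
        · exact ⟨1, by rw [e12]; omega, by rw [e12, show ((1:ZMod 5))+2 = 3 from rfl]; omega⟩
        · exact ⟨2, by rw [e23]; omega, by rw [e23, show ((2:ZMod 5))+2 = 4 from rfl]; omega⟩
        · exact ⟨3, by rw [e34]; omega, by rw [e34, show ((3:ZMod 5))+2 = 0 from rfl]; omega⟩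
        · exact ⟨4, by rw [e40]; omega, by rw [e40, show ((4:ZMod 5))+2 = 1 from rfl]; omega⟩
      obtain ⟨j, h1, h2⟩ := hpig
      have hsub := pent D hadj hE j h1 h2
      have hUcard : (D j ∪ D (j + 1)).card ≤ 3 := adj_union_card _ _ (hadj j) (hE j) (hE (j + 1)) h1
      obtain ⟨c₁, c₂, c₃, hc⟩ := cover_of_card_le_three _ hUcard
      refine ⟨δ, c₁, c₂, c₃, surj_of_ne_zero δ u (by rw [hδa, hx_u, hy_u, sub_zero]; exact one_ne_zero), ?_⟩
      intro p hp
      exact hc _ (hsub (σ p) (hmemD p hp))
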